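/- For any bipartite quasi-state ρ on ℂ^{d_A}⊗ℂ^{d_B} and any natural number n ≥ 1, the one-shot exact entanglement cost under PPTq operations of the n-fold tensor power satisfies E^{(1)}_{0,C,PPTq}(ρ^{⊗n}) ≤ log₂ ⌈2^{n·E_N(ρ)}⌉, where E_N is the logarithmic negativity. -/

import Mathlib

open scoped BigOperators ComplexOrder

noncomputable section

/-- Bipartite matrices on `ℂ^{IA} ⊗ ℂ^{IB}`, indexed by pairs. -/
abbrev BMat (IA IB : Type) : Type := Matrix (IA × IB) (IA × IB) ℂ

/-- Partial transpose on the `B` system: `(X^{T_B})_{(i,j),(k,l)} = X_{(i,l),(k,j)}`. -/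
def ptB {IA IB : Type} (X : BMat IA IB) : BMat IA IB :=
  fun p q => X (p.1, q.2) (q.1, p.2)

/-- Trace norm `‖X‖₁ = tr √(X† X)`. -/
noncomputable def traceNorm {n : Type} [Fintype n] [DecidableEq n]
    (X : Matrix n n ℂ) : ℝ :=
  (let hH := (Matrix.posSemidef_conjTranspose_mul_self X).1
   (hH.eigenvectorUnitary.1 * Matrix.diagonal (((↑) : ℝ → ℂ) ∘ Real.sqrt ∘ hH.eigenvalues) *
     (star hH.eigenvectorUnitary : Matrix n n ℂ)).trace).re

/-- Operator norm (largest singular value). -/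
noncomputable def opNorm {n : Type} [Fintype n] [DecidableEq n] (X : Matrix n n ℂ) : ℝ :=
  ‖Matrix.toEuclideanCLM (𝕜 := ℂ) X‖

/-- Logarithmic negativity `E_N(X) = log₂ ‖X^{T_B}‖₁`. -/
noncomputable def EN {IA IB : Type} [Fintype IA] [Fintype IB] [DecidableEq IA] [DecidableEq IB]
    (X : BMat IA IB) : ℝ :=
  Real.logb 2 (traceNorm (ptB X))

/-- The extension `id_k ⊗ f` of a map on matrices, acting blockwise. -/
def extMap {I J : Type} (f : Matrix I I ℂ → Matrix J J ℂ) (k : ℕ)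
    (M : Matrix (Fin k × I) (Fin k × I) ℂ) : Matrix (Fin k × J) (Fin k × J) ℂ :=
  fun p q => f (fun i i' => M (p.1, i) (q.1, i')) p.2 q.2

/-- A map on matrices is completely positive if all its extensions `id_k ⊗ f`
map positive semidefinite matrices to positive semidefinite matrices. -/
def CompletelyPositive {I J : Type} [Fintype I] [Fintype J]
    (f : Matrix I I ℂ → Matrix J J ℂ) : Prop :=
  ∀ (k : ℕ) (M : Matrix (Fin k × I) (Fin k × I) ℂ), M.PosSemidef → (extMap f k M).PosSemidef

/-- A PPTq operation: a Hermitian-preserving, trace-preserving linear map `N`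
such that `T_{B'} ∘ N ∘ T_B` is completely positive. -/
def IsPPTq {IA IB JA JB : Type} [Fintype IA] [Fintype IB] [Fintype JA] [Fintype JB]
    (N : BMat IA IB →ₗ[ℂ] BMat JA JB) : Prop :=
  (∀ X : BMat IA IB, X.IsHermitian → (N X).IsHermitian) ∧
  (∀ X : BMat IA IB, (N X).trace = X.trace) ∧
  CompletelyPositive (fun X => ptB (N (ptB X)))

/-- A bipartite quasi-state: Hermitian with trace one. -/
def IsQuasiState {IA IB : Type} [Fintype IA] [Fintype IB] (ρ : BMat IA IB) : Prop :=
  ρ.IsHermitian ∧ ρ.trace = 1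

/-- A bipartite quantum state: positive semidefinite with trace one. -/
def IsState {IA IB : Type} [Fintype IA] [Fintype IB] (ρ : BMat IA IB) : Prop :=
  ρ.PosSemidef ∧ ρ.trace = 1

/-- The maximally entangled state `Φ^d = (1/d) ∑_{i,j} |ii⟩⟨jj|`. -/
noncomputable def MES (d : ℕ) : BMat (Fin d) (Fin d) :=
  fun p q => if p.1 = p.2 ∧ q.1 = q.2 then (1 : ℂ) / d else 0

/-- `n`-fold tensor (Kronecker) power, with all `A` factors grouped against all `B` factors. -/
def tensorPow {IA IB : Type} (ρ : BMat IA IB) (n : ℕ) :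
    BMat (Fin n → IA) (Fin n → IB) :=
  fun p q => ∏ i : Fin n, ρ (p.1 i, p.2 i) (q.1 i, q.2 i)

/-- Tensor (Kronecker) product of two bipartite matrices, grouping `A` systems together
and `B` systems together. -/
def tensorMul {IA IB JA JB : Type} (ρ : BMat IA IB) (σ : BMat JA JB) :
    BMat (IA × JA) (IB × JB) :=
  fun p q => ρ (p.1.1, p.2.1) (q.1.1, q.2.1) * σ (p.1.2, p.2.2) (q.1.2, q.2.2)

/-- One-shot exact distillable entanglement under PPTq operations. -/
noncomputable def oneShotDistill {IA IB : Type} [Fintype IA] [Fintype IB]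
    (ρ : BMat IA IB) : ℝ :=
  sSup { x : ℝ | ∃ d : ℕ, 0 < d ∧ x = Real.logb 2 d ∧
    ∃ Λ : BMat IA IB →ₗ[ℂ] BMat (Fin d) (Fin d), IsPPTq Λ ∧ Λ ρ = MES d }

/-- One-shot exact entanglement cost under PPTq operations. -/
noncomputable def oneShotCost {IA IB : Type} [Fintype IA] [Fintype IB]
    (ρ : BMat IA IB) : ℝ :=
  sInf { x : ℝ | ∃ d : ℕ, 0 < d ∧ x = Real.logb 2 d ∧
    ∃ Λ : BMat (Fin d) (Fin d) →ₗ[ℂ] BMat IA IB, IsPPTq Λ ∧ Λ (MES d) = ρ }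

/-- The one-shot distillation error for `n` copies towards `Φ^d`, optimized over PPTq operations. -/
noncomputable def distillErr {IA IB : Type} [Fintype IA] [Fintype IB]
    [DecidableEq IA] [DecidableEq IB] (ρ : BMat IA IB) (n d : ℕ) : ℝ :=
  sInf { e : ℝ | ∃ Λ : BMat (Fin n → IA) (Fin n → IB) →ₗ[ℂ] BMat (Fin d) (Fin d),
    IsPPTq Λ ∧ e = traceNorm (Λ (tensorPow ρ n) - MES d) }

/-- The one-shot dilution error for preparing `n` copies from `Φ^d`, optimized over PPTq operations. -/
noncomputable def costErr {IA IB : Type} [Fintype IA] [Fintype IB]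
    [DecidableEq IA] [DecidableEq IB] (ρ : BMat IA IB) (n d : ℕ) : ℝ :=
  sInf { e : ℝ | ∃ Λ : BMat (Fin d) (Fin d) →ₗ[ℂ] BMat (Fin n → IA) (Fin n → IB),
    IsPPTq Λ ∧ e = traceNorm (tensorPow ρ n - Λ (MES d)) }

/-- Distillable entanglement under PPTq operations (asymptotically vanishing error). -/
noncomputable def EDppt {IA IB : Type} [Fintype IA] [Fintype IB]
    [DecidableEq IA] [DecidableEq IB] (ρ : BMat IA IB) : ℝ :=
  sSup { r : ℝ | Filter.Tendsto (fun n : ℕ => distillErr ρ n (2 ^ ⌊r * n⌋₊))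
    Filter.atTop (nhds 0) }

/-- Entanglement cost under PPTq operations (asymptotically vanishing error). -/
noncomputable def ECppt {IA IB : Type} [Fintype IA] [Fintype IB]
    [DecidableEq IA] [DecidableEq IB] (ρ : BMat IA IB) : ℝ :=
  sInf { r : ℝ | Filter.Tendsto (fun n : ℕ => costErr ρ n (2 ^ ⌈r * n⌉₊))
    Filter.atTop (nhds 0) }

/-- Tempered negativity `N_τ(σ | ρ)`. -/
noncomputable def temperedNeg {IA IB : Type} [Fintype IA] [Fintype IB]
    [DecidableEq IA] [DecidableEq IB] (σ ρ : BMat IA IB) : ℝ :=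
  sSup { t : ℝ | ∃ X : Matrix (IA × IB) (IA × IB) ℂ, X.IsHermitian ∧
    opNorm (ptB X) ≤ 1 ∧ (X * ρ).trace = (opNorm X : ℂ) ∧ (X * σ).trace = (t : ℂ) }

/-- Asymptotic exact conversion rate under PPTq operations. -/
noncomputable def convRate {IA IB JA JB : Type} [Fintype IA] [Fintype IB]
    [Fintype JA] [Fintype JB]
    (ρ : BMat IA IB) (σ : BMat JA JB) : ℝ :=
  sSup { r : ℝ | 0 ≤ r ∧ ∀ᶠ n : ℕ in Filter.atTop,
    ∃ Λ : BMat (Fin n → IA) (Fin n → IB) →ₗ[ℂ]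
          BMat (Fin ⌊r * n⌋₊ → JA) (Fin ⌊r * n⌋₊ → JB),
      IsPPTq Λ ∧ Λ (tensorPow ρ n) = tensorPow σ ⌊r * n⌋₊ }


/-! ### Auxiliary machinery for the proof -/

lemma psd_eq_ct_mul {m : Type} [Fintype m] {A : Matrix m m ℂ} (h : A.PosSemidef) :
    ∃ B : Matrix m m ℂ, A = Matrix.conjTranspose B * B := by
  classical
  open scoped MatrixOrder in
  obtain ⟨B, hB⟩ := CStarAlgebra.nonneg_iff_eq_star_mul_self.mp h.nonneg
  exact ⟨B, hB⟩

section Aux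

open Matrix

set_option linter.unusedSectionVars false

-- basic partial transpose lemmas
lemma ptB_ptB {IA IB : Type} (X : BMat IA IB) : ptB (ptB X) = X := rfl

lemma ptB_trace {IA IB : Type} [Fintype IA] [Fintype IB] (X : BMat IA IB) :
    (ptB X).trace = X.trace := rfl

lemma ptB_isHermitian {IA IB : Type} {X : BMat IA IB} (h : X.IsHermitian) :
    (ptB X).IsHermitian := by
  ext p q
  have := congrFun (congrFun h (p.1, q.2)) (q.1, p.2)
  simpa [Matrix.conjTranspose_apply, ptB] using this

-- tensor families
def tFam {I J : Type} {n : ℕ} (f : Fin n → BMat I J) : BMat (Fin n → I) (Fin n → J) :=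
  fun p q => ∏ i, f i (p.1 i, p.2 i) (q.1 i, q.2 i)

variable {I J : Type} [Fintype I] [Fintype J] {n : ℕ}

lemma sum_pair_fun (F : Fin n → (I × J) → ℂ) :
    ∑ p : (Fin n → I) × (Fin n → J), ∏ i, F i (p.1 i, p.2 i) = ∏ i, ∑ c : I × J, F i c := by
  rw [Fintype.prod_sum]
  exact (Fintype.sum_equiv (Equiv.arrowProdEquivProdArrow (Fin n) (fun _ => I) (fun _ => J))
    _ _ (fun x => rfl)).symm

lemma tFam_mul (f g : Fin n → BMat I J) :
    tFam f * tFam g = tFam (fun i => f i * g i) := by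
  ext p q
  simp only [Matrix.mul_apply, tFam]
  simp_rw [← Finset.prod_mul_distrib]
  exact sum_pair_fun (fun i c => f i (p.1 i, p.2 i) c * g i c (q.1 i, q.2 i))

lemma tFam_conjTranspose (f : Fin n → BMat I J) :
    (tFam f)ᴴ = tFam (fun i => (f i)ᴴ) := by
  ext p q
  simp [tFam, Matrix.conjTranspose_apply, star_prod]

lemma tFam_posSemidef (f : Fin n → BMat I J) (hf : ∀ i, (f i).PosSemidef) :
    (tFam f).PosSemidef := by
  choose B hB using fun i => psd_eq_ct_mul (hf i)
  have : tFam f = (tFam B)ᴴ * tFam B := by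
    rw [tFam_conjTranspose, tFam_mul]
    exact congrArg tFam (funext fun i => hB i)
  rw [this]
  exact Matrix.posSemidef_conjTranspose_mul_self _

lemma tFam_trace (f : Fin n → BMat I J) :
    (tFam f).trace = ∏ i, (f i).trace := by
  simp only [Matrix.trace, Matrix.diag, tFam]
  exact sum_pair_fun (fun i c => f i c c)

end Aux

section CPAux

open Matrix

set_option linter.unusedSectionVars false

variable {I J : Type} [Fintype I] [Fintype J] [DecidableEq I] [DecidableEq J]

def kron {a b : Type} (A : Matrix a a ℂ) (B : Matrix b b ℂ) : Matrix (a × b) (a × b) ℂ :=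
  fun p q => A p.1 q.1 * B p.2 q.2

lemma kron_posSemidef {a b : Type} [Fintype a] [Fintype b] [DecidableEq a] [DecidableEq b]
    {A : Matrix a a ℂ} {B : Matrix b b ℂ} (hA : A.PosSemidef) (hB : B.PosSemidef) :
    (kron A B).PosSemidef := by
  obtain ⟨A', rfl⟩ := psd_eq_ct_mul hA
  obtain ⟨B', rfl⟩ := psd_eq_ct_mul hB
  have : kron (A'ᴴ * A') (B'ᴴ * B') = (kron A' B')ᴴ * kron A' B' := by
    ext p q
    simp only [kron, Matrix.mul_apply, Matrix.conjTranspose_apply, Fintype.sum_prod_type,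
      Finset.sum_mul, Finset.mul_sum, star_mul']
    rw [Finset.sum_comm]
    apply Finset.sum_congr rfl; intro i _
    apply Finset.sum_congr rfl; intro j _
    ring
  rw [this]
  exact Matrix.posSemidef_conjTranspose_mul_self _

lemma cp_traceForm (P : Matrix I I ℂ) (Q : Matrix J J ℂ)
    (hP : P.PosSemidef) (hQ : Q.PosSemidef) :
    CompletelyPositive (fun X => (P * X).trace • Q) := by
  intro k M hM
  obtain ⟨R, hR⟩ := psd_eq_ct_mul hP
  obtain ⟨S, hS⟩ := psd_eq_ct_mul hM
  set C : Matrix (Fin k) (Fin k) ℂ :=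
    fun p q => (P * Matrix.of (fun i i' => M (p, i) (q, i'))).trace with hC
  have hext : extMap (fun X => (P * X).trace • Q) k M = kron C Q := by
    ext ⟨p, j⟩ ⟨q, j'⟩
    rfl
  rw [hext]
  apply kron_posSemidef _ hQ
  set L : Matrix (I × (Fin k × I)) (Fin k) ℂ :=
    fun st q => ∑ i, star (R st.1 i) * S st.2 (q, i) with hL
  have : C = Lᴴ * L := by
    ext p q
    simp_rw [Matrix.mul_apply, Matrix.conjTranspose_apply]
    simp only [hC, Matrix.trace, Matrix.diag, Matrix.mul_apply, Matrix.of_apply,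
      Matrix.conjTranspose_apply, hL, hR, hS, Fintype.sum_prod_type,
      Finset.sum_mul, Finset.mul_sum, star_sum, star_mul', star_star]
    conv_rhs => rw [Finset.sum_comm]
    conv_rhs => enter [2, c]; rw [Finset.sum_comm]
    conv_rhs => enter [2, c, 2, d]; rw [Finset.sum_comm]
    conv_rhs => enter [2, c, 2, d, 2, a]; rw [Finset.sum_comm]
    conv_rhs => enter [2, c]; rw [Finset.sum_comm]
    conv_rhs => rw [Finset.sum_comm]
    conv_rhs => enter [2, a, 2, c]; rw [Finset.sum_comm]
    conv_rhs => enter [2, a]; rw [Finset.sum_comm]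
    refine Finset.sum_congr rfl fun a _ => Finset.sum_congr rfl fun b _ =>
      Finset.sum_congr rfl fun c _ => Finset.sum_congr rfl fun d _ =>
      Finset.sum_congr rfl fun e _ => by ring
  rw [this]
  exact Matrix.posSemidef_conjTranspose_mul_self _

lemma cp_add {f g : Matrix I I ℂ → Matrix J J ℂ}
    (hf : CompletelyPositive f) (hg : CompletelyPositive g) :
    CompletelyPositive (fun X => f X + g X) := by
  intro k M hM
  have : extMap (fun X => f X + g X) k M = extMap f k M + extMap g k M := by
    ext p q
    rfl
  rw [this]
  exact (hf k M hM).add (hg k M hM)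

end CPAux

section SpecAuxSec

open Matrix

set_option linter.unusedSectionVars false

variable {m : Type} [Fintype m] [DecidableEq m]

lemma isHermitian_smul_real {M : Matrix m m ℂ} (h : M.IsHermitian) {c : ℂ} (hc : star c = c) :
    (c • M).IsHermitian := by
  rw [Matrix.IsHermitian, Matrix.conjTranspose_smul, hc, h.eq]

lemma posSemidef_smul_real {M : Matrix m m ℂ} (h : M.PosSemidef) {r : ℝ} (hr : 0 ≤ r) :
    ((r : ℂ) • M).PosSemidef := by
  refine ⟨isHermitian_smul_real h.1 (Complex.conj_ofReal r), fun x => ?_⟩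
  exact (h.smul (Complex.zero_le_real.mpr hr)).2 x

lemma posSemidef_trace_zero {M : Matrix m m ℂ} (h : M.PosSemidef) (ht : M.trace = 0) :
    M = 0 := by
  obtain ⟨B, rfl⟩ := psd_eq_ct_mul h
  have key : (Bᴴ * B).trace = ((∑ j, ∑ i, Complex.normSq (B i j) : ℝ) : ℂ) := by
    push_cast
    simp only [Matrix.trace, Matrix.diag, Matrix.mul_apply, Matrix.conjTranspose_apply]
    refine Finset.sum_congr rfl fun j _ => Finset.sum_congr rfl fun i _ => ?_
    rw [Complex.normSq_eq_conj_mul_self]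
    rfl
  rw [key] at ht
  have h0 : (∑ j, ∑ i, Complex.normSq (B i j) : ℝ) = 0 := by exact_mod_cast ht
  have hB : B = 0 := by
    ext i j
    have h1 : ∀ j ∈ Finset.univ, (0:ℝ) ≤ ∑ i, Complex.normSq (B i j) :=
      fun j _ => Finset.sum_nonneg fun i _ => Complex.normSq_nonneg _
    have h2 := (Finset.sum_eq_zero_iff_of_nonneg h1).mp h0 j (Finset.mem_univ j)
    have h3 := (Finset.sum_eq_zero_iff_of_nonneg
      (fun i _ => Complex.normSq_nonneg (B i j))).mp h2 i (Finset.mem_univ i)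
    exact Complex.normSq_eq_zero.mp h3
  rw [hB]
  simp

lemma star_trace_mul_herm {P Y : Matrix m m ℂ} (hP : P.IsHermitian) (hY : Y.IsHermitian) :
    star ((P * Y).trace) = (P * Y).trace := by
  rw [← Matrix.trace_conjTranspose, Matrix.conjTranspose_mul, hP.eq, hY.eq,
    Matrix.trace_mul_comm]

namespace SpecAux

variable {σ : Matrix m m ℂ} (hσ : σ.IsHermitian)

def U : Matrix m m ℂ := hσ.eigenvectorUnitary
def μ (i : m) : ℝ := hσ.eigenvalues i
def μp (i : m) : ℝ := max (μ hσ i) 0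
def μn (i : m) : ℝ := max (-μ hσ i) 0

def cdiag (f : m → ℝ) : Matrix m m ℂ := Matrix.diagonal (fun i => (f i : ℂ))

lemma star_U_mul_U : star (U hσ) * U hσ = 1 := by
  simpa [U] using unitary.coe_star_mul_self hσ.eigenvectorUnitary

lemma conj_posSemidef {f : m → ℝ} (hf : ∀ i, 0 ≤ f i) :
    (U hσ * cdiag f * star (U hσ)).PosSemidef := by
  have : (cdiag f).PosSemidef := by
    refine Matrix.posSemidef_diagonal_iff.mpr fun i => ?_
    simpa using Complex.zero_le_real.mpr (hf i)
  simpa [Matrix.star_eq_conjTranspose] using this.mul_mul_conjTranspose_same (U hσ)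

def pPart : Matrix m m ℂ := U hσ * cdiag (μp hσ) * star (U hσ)
def nPart : Matrix m m ℂ := U hσ * cdiag (μn hσ) * star (U hσ)

lemma pPart_posSemidef : (pPart hσ).PosSemidef :=
  conj_posSemidef hσ (fun _ => le_max_right _ _)
lemma nPart_posSemidef : (nPart hσ).PosSemidef :=
  conj_posSemidef hσ (fun _ => le_max_right _ _)

lemma pPart_sub_nPart : pPart hσ - nPart hσ = σ := by
  have hd : cdiag (μp hσ) - cdiag (μn hσ) =
      Matrix.diagonal (RCLike.ofReal ∘ hσ.eigenvalues) := by
    simp only [cdiag, Matrix.diagonal_sub]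
    refine congrArg _ (funext fun i => ?_)
    have h1 : μp hσ i - μn hσ i = μ hσ i := by
      rcases le_or_gt (μ hσ i) 0 with h | h
      · simp [μp, μn, max_eq_right h, max_eq_left (neg_nonneg.mpr h)]
      · simp [μp, μn, max_eq_left h.le, max_eq_right (neg_nonpos.mpr h.le)]
    calc ((μp hσ i : ℝ) : ℂ) - ((μn hσ i : ℝ) : ℂ)
        = ((μp hσ i - μn hσ i : ℝ) : ℂ) := by push_cast; ring
      _ = _ := by rw [h1]; rfl
  rw [pPart, nPart, ← Matrix.sub_mul, ← Matrix.mul_sub, hd]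
  exact hσ.spectral_theorem.symm

lemma trace_conj_diag (d : m → ℂ) :
    (U hσ * Matrix.diagonal d * star (U hσ)).trace = ∑ i, d i := by
  rw [Matrix.trace_mul_cycle, star_U_mul_U, Matrix.one_mul, Matrix.trace_diagonal]

lemma trace_conj_cdiag (f : m → ℝ) :
    (U hσ * cdiag f * star (U hσ)).trace = ((∑ i, f i : ℝ) : ℂ) := by
  rw [cdiag, trace_conj_diag]; push_cast; rfl

lemma trace_pPart : (pPart hσ).trace = ((∑ i, μp hσ i : ℝ) : ℂ) := trace_conj_cdiag hσ _
lemma trace_nPart : (nPart hσ).trace = ((∑ i, μn hσ i : ℝ) : ℂ) := trace_conj_cdiag hσ _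

lemma conj_mul (f g : m → ℝ) :
    (U hσ * cdiag f * star (U hσ)) * (U hσ * cdiag g * star (U hσ)) =
      U hσ * cdiag (fun i => f i * g i) * star (U hσ) := by
  calc (U hσ * cdiag f * star (U hσ)) * (U hσ * cdiag g * star (U hσ))
      = U hσ * (cdiag f * (star (U hσ) * U hσ) * cdiag g) * star (U hσ) := by
        simp only [Matrix.mul_assoc]
    _ = _ := by
        rw [star_U_mul_U, Matrix.mul_one]
        simp only [cdiag, Matrix.diagonal_mul_diagonal]
        congr 2
        funext i
        push_cast
        ring

lemma spectral' : σ = U hσ * cdiag (μ hσ) * star (U hσ) := hσ.spectral_theorem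

lemma traceNorm_eq_sum_abs : traceNorm σ = ∑ i, |μ hσ i| := by
  have hW : (U hσ * cdiag (fun i => |μ hσ i|) * star (U hσ)).PosSemidef :=
    conj_posSemidef hσ (fun _ => abs_nonneg _)
  have hsq : (U hσ * cdiag (fun i => |μ hσ i|) * star (U hσ)) ^ 2 = σᴴ * σ := by
    rw [pow_two, conj_mul]
    have h1 : (fun i => |μ hσ i| * |μ hσ i|) = fun i => μ hσ i * μ hσ i := by
      funext i; exact abs_mul_abs_self _
    rw [h1, hσ.eq]
    conv_rhs => rw [spectral' hσ]
    rw [conj_mul]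
  have hP := Matrix.posSemidef_conjTranspose_mul_self σ
  open scoped MatrixOrder in
  have hkey : ((Matrix.posSemidef_conjTranspose_mul_self σ).1.eigenvectorUnitary.1 *
      Matrix.diagonal (((↑) : ℝ → ℂ) ∘ Real.sqrt ∘
        (Matrix.posSemidef_conjTranspose_mul_self σ).1.eigenvalues) *
      (star (Matrix.posSemidef_conjTranspose_mul_self σ).1.eigenvectorUnitary : Matrix m m ℂ)) =
      U hσ * cdiag (fun i => |μ hσ i|) * star (U hσ) := by
    calc _ = cfc Real.sqrt (σᴴ * σ) := by rw [hP.1.cfc_eq]; rfl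
      _ = cfcₙ Real.sqrt (σᴴ * σ) := (cfcₙ_eq_cfc ..).symm
      _ = CFC.sqrt (σᴴ * σ) := (CFC.sqrt_eq_real_sqrt _ hP.nonneg).symm
      _ = _ := (CFC.sqrt_eq_iff _ _ hP.nonneg hW.nonneg).mpr (by rw [← pow_two]; exact hsq)
  rw [traceNorm]
  dsimp only
  rw [hkey, trace_conj_cdiag]
  exact Complex.ofReal_re _

end SpecAux

lemma exists_AB [Nonempty m] {M Mp Mn : Matrix m m ℂ} (hMp : Mp.PosSemidef)
    (hMn : Mn.PosSemidef) (hM : M = Mp - Mn) {tp tn : ℝ}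
    (htp : Mp.trace = (tp : ℂ)) (htn : Mn.trace = (tn : ℂ))
    (h1 : tp - tn = 1) (htn0 : 0 ≤ tn) {d : ℕ} (hd : 1 ≤ d) (hS : tp + tn ≤ d) :
    ∃ A B : Matrix m m ℂ, A.PosSemidef ∧ B.PosSemidef ∧ A.trace = 1 ∧ B.trace = 1 ∧
      (((d : ℂ) + 1) / 2) • A - (((d : ℂ) - 1) / 2) • B = M := by
  have hcard : (0 : ℝ) < Fintype.card m := by
    exact_mod_cast Fintype.card_pos
  set G : Matrix m m ℂ := (((Fintype.card m : ℝ)⁻¹ : ℝ) : ℂ) • (1 : Matrix m m ℂ) with hG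
  have hGpsd : G.PosSemidef := posSemidef_smul_real Matrix.PosDef.one.posSemidef
    (inv_nonneg.mpr hcard.le)
  have hGtr : G.trace = 1 := by
    rw [hG, Matrix.trace_smul, Matrix.trace_one, smul_eq_mul]
    push_cast
    rw [inv_mul_cancel₀]
    exact_mod_cast hcard.ne'
  rcases eq_or_lt_of_le hd with hd1 | hd2
  · have hd1' : (d : ℝ) = 1 := by exact_mod_cast hd1.symm
    have htn_le : tn ≤ 0 := by linarith
    have htn_eq : tn = 0 := le_antisymm htn_le htn0
    have hMn0 : Mn = 0 := posSemidef_trace_zero hMn (by rw [htn, htn_eq]; simp)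
    refine ⟨Mp, G, hMp, hGpsd, ?_, hGtr, ?_⟩
    · rw [htp]; norm_cast; linarith
    · have hdc : (d : ℂ) = 1 := by exact_mod_cast hd1.symm
      rw [hdc, hM, hMn0]
      norm_num
  · have hd2' : (2 : ℝ) ≤ d := by exact_mod_cast hd2
    set α : ℝ := ((d : ℝ) - (tp + tn)) / 2 with hα
    have hα0 : 0 ≤ α := by rw [hα]; linarith
    have hdp1 : (0 : ℝ) < (d : ℝ) + 1 := by linarith
    have hdm1 : (0 : ℝ) < (d : ℝ) - 1 := by linarith
    set A : Matrix m m ℂ := ((2 / ((d : ℝ) + 1) : ℝ) : ℂ) • (Mp + (α : ℂ) • G) with hA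
    set B : Matrix m m ℂ := ((2 / ((d : ℝ) - 1) : ℝ) : ℂ) • (Mn + (α : ℂ) • G) with hB
    have hApsd : A.PosSemidef :=
      posSemidef_smul_real (hMp.add (posSemidef_smul_real hGpsd hα0)) (by positivity)
    have hBpsd : B.PosSemidef :=
      posSemidef_smul_real (hMn.add (posSemidef_smul_real hGpsd hα0)) (by positivity)
    have hAtr : A.trace = 1 := by
      rw [hA, Matrix.trace_smul, Matrix.trace_add, Matrix.trace_smul, htp, hGtr,
        smul_eq_mul, smul_eq_mul, mul_one]
      have : ((2 / ((d : ℝ) + 1) : ℝ) : ℂ) * ((tp : ℂ) + (α : ℂ)) =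
          (((2 / ((d : ℝ) + 1)) * (tp + α) : ℝ) : ℂ) := by push_cast; ring
      rw [this]
      rw [Complex.ofReal_eq_one]
      rw [hα, div_mul_eq_mul_div, div_eq_one_iff_eq hdp1.ne']
      linarith
    have hBtr : B.trace = 1 := by
      rw [hB, Matrix.trace_smul, Matrix.trace_add, Matrix.trace_smul, htn, hGtr,
        smul_eq_mul, smul_eq_mul, mul_one]
      have : ((2 / ((d : ℝ) - 1) : ℝ) : ℂ) * ((tn : ℂ) + (α : ℂ)) =
          (((2 / ((d : ℝ) - 1)) * (tn + α) : ℝ) : ℂ) := by push_cast; ring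
      rw [this]
      rw [Complex.ofReal_eq_one]
      rw [hα, div_mul_eq_mul_div, div_eq_one_iff_eq hdm1.ne']
      linarith
    refine ⟨A, B, hApsd, hBpsd, hAtr, hBtr, ?_⟩
    rw [hA, hB, smul_smul, smul_smul]
    have e1 : (((d : ℂ) + 1) / 2) * ((2 / ((d : ℝ) + 1) : ℝ) : ℂ) = 1 := by
      push_cast
      have : ((d : ℂ) + 1) ≠ 0 := by
        intro hcon
        have := congrArg Complex.re hcon
        simp at this
        linarith
      field_simp
    have e2 : (((d : ℂ) - 1) / 2) * ((2 / ((d : ℝ) - 1) : ℝ) : ℂ) = 1 := by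
      push_cast
      have : ((d : ℂ) - 1) ≠ 0 := by
        intro hcon
        have := congrArg Complex.re hcon
        simp at this
        linarith
      field_simp
    rw [e1]
    rw [smul_smul, e2, one_smul, one_smul, hM]
    abel

end SpecAuxSec

section DecompSec

open Matrix

set_option linter.unusedSectionVars false

variable {I J : Type} [Fintype I] [Fintype J] {n : ℕ}

lemma exists_decomp {σ Pσ Nσ : BMat I J} (hP : Pσ.PosSemidef) (hN : Nσ.PosSemidef)
    (hσ : σ = Pσ - Nσ) {a b : ℝ} (ha : Pσ.trace = (a : ℂ)) (hb : Nσ.trace = (b : ℂ)) :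
    ∃ Mp Mn : BMat (Fin n → I) (Fin n → J), Mp.PosSemidef ∧ Mn.PosSemidef ∧
      tFam (fun _ => σ) = Mp - Mn ∧ Mp.trace + Mn.trace = (((a + b) ^ n : ℝ) : ℂ) := by
  classical
  set F : Finset (Fin n) → BMat (Fin n → I) (Fin n → J) :=
    fun t => tFam (fun i => if i ∈ t then Pσ else Nσ) with hF
  have hFpsd : ∀ t, (F t).PosSemidef := fun t =>
    tFam_posSemidef _ (fun i => by split_ifs <;> assumption)
  have hFtr : ∀ t : Finset (Fin n), (F t).trace = (a : ℂ) ^ t.card * (b : ℂ) ^ tᶜ.card := by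
    intro t
    rw [hF, tFam_trace]
    rw [← Finset.prod_mul_prod_compl t]
    congr 1
    · rw [Finset.prod_congr rfl (fun i hi => by rw [if_pos hi, ha]), Finset.prod_const]
    · rw [Finset.prod_congr rfl (fun i hi => by
        rw [if_neg (Finset.mem_compl.mp hi), hb]), Finset.prod_const]
  have hFentry : ∀ (t : Finset (Fin n)) (p q : (Fin n → I) × (Fin n → J)),
      F t p q = (∏ i ∈ t, Pσ (p.1 i, p.2 i) (q.1 i, q.2 i)) *
        ∏ i ∈ tᶜ, Nσ (p.1 i, p.2 i) (q.1 i, q.2 i) := by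
    intro t p q
    rw [hF]
    show (∏ i, (if i ∈ t then Pσ else Nσ) (p.1 i, p.2 i) (q.1 i, q.2 i)) = _
    rw [← Finset.prod_mul_prod_compl t]
    congr 1
    · exact Finset.prod_congr rfl fun i hi => by rw [if_pos hi]
    · exact Finset.prod_congr rfl fun i hi => by rw [if_neg (Finset.mem_compl.mp hi)]
  set Mp : BMat (Fin n → I) (Fin n → J) :=
    ∑ t ∈ Finset.univ.filter (fun t : Finset (Fin n) => Even tᶜ.card), F t with hMp
  set Mn : BMat (Fin n → I) (Fin n → J) :=
    ∑ t ∈ Finset.univ.filter (fun t : Finset (Fin n) => ¬ Even tᶜ.card), F t with hMn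
  have hMppsd : Mp.PosSemidef := by
    rw [hMp]
    refine Finset.sum_induction F Matrix.PosSemidef (fun x y hx hy => hx.add hy)
      Matrix.PosSemidef.zero (fun t _ => hFpsd t)
  have hMnpsd : Mn.PosSemidef := by
    rw [hMn]
    refine Finset.sum_induction F Matrix.PosSemidef (fun x y hx hy => hx.add hy)
      Matrix.PosSemidef.zero (fun t _ => hFpsd t)
  refine ⟨Mp, Mn, hMppsd, hMnpsd, ?_, ?_⟩
  · ext p q
    have hexp : tFam (fun _ : Fin n => σ) p q =
        ∑ t : Finset (Fin n), (-1 : ℂ) ^ tᶜ.card * F t p q := by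
      have : ∀ i : Fin n, σ (p.1 i, p.2 i) (q.1 i, q.2 i) =
          Pσ (p.1 i, p.2 i) (q.1 i, q.2 i) + (- Nσ (p.1 i, p.2 i) (q.1 i, q.2 i)) := by
        intro i; rw [hσ, Matrix.sub_apply, sub_eq_add_neg]
      show (∏ i, σ (p.1 i, p.2 i) (q.1 i, q.2 i)) = _
      rw [Finset.prod_congr rfl (fun i _ => this i), Fintype.prod_add]
      refine Finset.sum_congr rfl fun t _ => ?_
      rw [hFentry t p q]
      have hneg : ∀ (s : Finset (Fin n)) (g : Fin n → ℂ),
          ∏ i ∈ s, (-g i) = (-1 : ℂ) ^ s.card * ∏ i ∈ s, g i := by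
        intro s g
        rw [← Finset.prod_const, ← Finset.prod_mul_distrib]
        exact Finset.prod_congr rfl fun i _ => (neg_one_mul _).symm
      rw [hneg]
      ring
    rw [hexp, Matrix.sub_apply, hMp, hMn, Matrix.sum_apply, Matrix.sum_apply,
      ← Finset.sum_filter_add_sum_filter_not Finset.univ (fun t : Finset (Fin n) => Even tᶜ.card)
        (fun t => (-1 : ℂ) ^ tᶜ.card * F t p q)]
    have h1 : ∑ t ∈ Finset.univ.filter (fun t : Finset (Fin n) => Even tᶜ.card),
        (-1 : ℂ) ^ tᶜ.card * F t p q =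
        ∑ t ∈ Finset.univ.filter (fun t : Finset (Fin n) => Even tᶜ.card), F t p q := by
      refine Finset.sum_congr rfl fun t ht => ?_
      rw [(Finset.mem_filter.mp ht).2.neg_one_pow, one_mul]
    have h2 : ∑ t ∈ Finset.univ.filter (fun t : Finset (Fin n) => ¬ Even tᶜ.card),
        (-1 : ℂ) ^ tᶜ.card * F t p q =
        - ∑ t ∈ Finset.univ.filter (fun t : Finset (Fin n) => ¬ Even tᶜ.card), F t p q := by
      rw [← Finset.sum_neg_distrib]
      refine Finset.sum_congr rfl fun t ht => ?_
      rw [(Nat.not_even_iff_odd.mp (Finset.mem_filter.mp ht).2).neg_one_pow]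
      ring
    rw [h1, h2, ← sub_eq_add_neg]
  · rw [hMp, hMn, Matrix.trace_sum, Matrix.trace_sum,
      Finset.sum_filter_add_sum_filter_not Finset.univ
        (fun t : Finset (Fin n) => Even tᶜ.card) (fun t => (F t).trace)]
    rw [Finset.sum_congr rfl (fun t _ => hFtr t)]
    have h := Fintype.prod_add (fun _ : Fin n => (a : ℂ)) (fun _ => (b : ℂ))
    simp only [Finset.prod_const] at h
    rw [← h]
    push_cast
    rw [Finset.card_univ, Fintype.card_fin]

end DecompSec

section SwapSec

open Matrix

set_option linter.unusedSectionVars false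

def Sw (d : ℕ) : BMat (Fin d) (Fin d) :=
  fun p q => if p.1 = q.2 ∧ q.1 = p.2 then 1 else 0

variable {d : ℕ}

lemma Sw_herm : (Sw d).IsHermitian := by
  refine Matrix.IsHermitian.ext fun p q => ?_
  simp only [Sw]
  split_ifs with h1 h2 h2 <;> simp_all [and_comm] <;> tauto

lemma Sw_mul_Sw : Sw d * Sw d = 1 := by
  ext p q
  simp only [Matrix.mul_apply, Sw, Fintype.sum_prod_type, ite_and]
  rw [Finset.sum_comm]
  simp [Finset.sum_ite_eq', Finset.sum_ite_eq, Matrix.one_apply, Prod.ext_iff, eq_comm, and_comm]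
  split_ifs <;> tauto

lemma trace_Sw : (Sw d).trace = (d : ℂ) := by
  simp only [Matrix.trace, Matrix.diag, Sw, Fintype.sum_prod_type, and_self]
  simp [Finset.sum_ite_eq]

lemma ptB_MES : ptB (MES d) = ((d : ℂ))⁻¹ • Sw d := by
  ext p q
  simp only [ptB, MES, Sw, Matrix.smul_apply, smul_eq_mul, mul_ite, mul_one, mul_zero, one_div]

def PpM (d : ℕ) : BMat (Fin d) (Fin d) := (2 : ℂ)⁻¹ • (1 + Sw d)
def PmM (d : ℕ) : BMat (Fin d) (Fin d) := (2 : ℂ)⁻¹ • (1 - Sw d)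

lemma PpM_herm : (PpM d).IsHermitian :=
  isHermitian_smul_real (Matrix.isHermitian_one.add Sw_herm) (by norm_num)

lemma PmM_herm : (PmM d).IsHermitian :=
  isHermitian_smul_real (Matrix.isHermitian_one.sub Sw_herm) (by norm_num)

lemma PpM_mul_PpM : PpM d * PpM d = PpM d := by
  rw [PpM, Matrix.smul_mul, Matrix.mul_smul, smul_smul]
  have h : (1 + Sw d) * (1 + Sw d) = (2 : ℂ) • (1 + Sw d) := by
    simp only [Matrix.mul_add, Matrix.add_mul, Matrix.one_mul, Matrix.mul_one, Sw_mul_Sw,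
      two_smul]
    abel
  rw [h, smul_smul]
  norm_num

lemma PmM_mul_PmM : PmM d * PmM d = PmM d := by
  rw [PmM, Matrix.smul_mul, Matrix.mul_smul, smul_smul]
  have h : (1 - Sw d) * (1 - Sw d) = (2 : ℂ) • (1 - Sw d) := by
    simp only [Matrix.mul_sub, Matrix.sub_mul, Matrix.one_mul, Matrix.mul_one, Sw_mul_Sw,
      two_smul]
    abel
  rw [h, smul_smul]
  norm_num

lemma PpM_posSemidef : (PpM d).PosSemidef := by
  have h : (PpM d)ᴴ * PpM d = PpM d := by rw [PpM_herm.eq, PpM_mul_PpM]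
  exact h ▸ Matrix.posSemidef_conjTranspose_mul_self _

lemma PmM_posSemidef : (PmM d).PosSemidef := by
  have h : (PmM d)ᴴ * PmM d = PmM d := by rw [PmM_herm.eq, PmM_mul_PmM]
  exact h ▸ Matrix.posSemidef_conjTranspose_mul_self _

lemma PpM_add_PmM : PpM d + PmM d = 1 := by
  rw [PpM, PmM, ← smul_add]
  have : ((1 : BMat (Fin d) (Fin d)) + Sw d) + (1 - Sw d) = (2 : ℂ) • 1 := by
    rw [two_smul]; abel
  rw [this, smul_smul]
  norm_num

lemma trace_one' : (1 : BMat (Fin d) (Fin d)).trace = ((d * d : ℕ) : ℂ) := by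
  rw [Matrix.trace_one]
  norm_cast
  simp [Fintype.card_prod]

lemma trace_PpM : (PpM d).trace = (2 : ℂ)⁻¹ * ((d : ℂ) * d + d) := by
  rw [PpM, Matrix.trace_smul, Matrix.trace_add, trace_one', trace_Sw, smul_eq_mul]
  push_cast
  ring

lemma trace_PmM : (PmM d).trace = (2 : ℂ)⁻¹ * ((d : ℂ) * d - d) := by
  rw [PmM, Matrix.trace_smul, Matrix.trace_sub, trace_one', trace_Sw, smul_eq_mul]
  push_cast
  ring

lemma PpM_mul_Sw : PpM d * Sw d = PpM d := by
  rw [PpM, Matrix.smul_mul, Matrix.add_mul, Matrix.one_mul, Sw_mul_Sw]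
  rw [add_comm]

lemma PmM_mul_Sw : PmM d * Sw d = - PmM d := by
  rw [PmM, Matrix.smul_mul, Matrix.sub_mul, Matrix.one_mul, Sw_mul_Sw, ← smul_neg]
  congr 1
  abel

end SwapSec

section MapSec

open Matrix

def ptBL (IA IB : Type) : BMat IA IB →ₗ[ℂ] BMat IA IB where
  toFun := ptB
  map_add' := fun _ _ => rfl
  map_smul' := fun _ _ => rfl

def GamL {IA IB JA JB : Type} [Fintype IA] [Fintype IB]
    (P P' : BMat IA IB) (A B : BMat JA JB) : BMat IA IB →ₗ[ℂ] BMat JA JB where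
  toFun X := (P * X).trace • A + (P' * X).trace • B
  map_add' X Y := by
    simp only [Matrix.mul_add, Matrix.trace_add, add_smul]
    abel
  map_smul' c X := by
    simp only [Matrix.mul_smul, Matrix.trace_smul, smul_eq_mul, RingHom.id_apply, smul_add,
      smul_smul]

def LamL {IA IB JA JB : Type} [Fintype IA] [Fintype IB]
    (P P' : BMat IA IB) (A B : BMat JA JB) : BMat IA IB →ₗ[ℂ] BMat JA JB :=
  (ptBL JA JB).comp ((GamL P P' A B).comp (ptBL IA IB))

end MapSec

/-- One-shot exact entanglement cost of `ρ^{⊗n}` under PPTq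
operations is at most `log₂ ⌈2^{n·E_N(ρ)}⌉`. -/
theorem oneShotCost_tensorPow_le {dA dB : ℕ}
    (ρ : BMat (Fin dA) (Fin dB)) (hρ : IsQuasiState ρ) (n : ℕ) (hn : 1 ≤ n) :
    oneShotCost (tensorPow ρ n) ≤ Real.logb 2 (⌈(2 : ℝ) ^ ((n : ℝ) * EN ρ)⌉₊ : ℝ) := by
  classical
  obtain ⟨hHerm, hTr⟩ := hρ
  have hdA : 0 < dA := by
    rcases Nat.eq_zero_or_pos dA with h | h
    · subst h
      have h0 : ρ.trace = 0 := Matrix.trace_eq_zero_of_isEmpty ρ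
      rw [hTr] at h0
      exact absurd h0 one_ne_zero
    · exact h
  have hdB : 0 < dB := by
    rcases Nat.eq_zero_or_pos dB with h | h
    · subst h
      have h0 : ρ.trace = 0 := Matrix.trace_eq_zero_of_isEmpty ρ
      rw [hTr] at h0
      exact absurd h0 one_ne_zero
    · exact h
  have hNA : Nonempty (Fin dA) := ⟨⟨0, hdA⟩⟩
  have hNB : Nonempty (Fin dB) := ⟨⟨0, hdB⟩⟩
  haveI hNE : Nonempty ((Fin n → Fin dA) × (Fin n → Fin dB)) :=
    ⟨(fun _ => hNA.some, fun _ => hNB.some)⟩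
  set σ : BMat (Fin dA) (Fin dB) := ptB ρ with hσdef
  have hσH : σ.IsHermitian := ptB_isHermitian hHerm
  set a : ℝ := ∑ i, SpecAux.μp hσH i with ha_def
  set b : ℝ := ∑ i, SpecAux.μn hσH i with hb_def
  have hσsub : σ = SpecAux.pPart hσH - SpecAux.nPart hσH := (SpecAux.pPart_sub_nPart hσH).symm
  have hσtr : σ.trace = 1 := hTr
  have hμsum : ∑ i, SpecAux.μ hσH i = 1 := by
    have h1 : σ.trace = ((∑ i, SpecAux.μ hσH i : ℝ) : ℂ) := by
      conv_lhs => rw [SpecAux.spectral' hσH]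
      exact SpecAux.trace_conj_cdiag hσH _
    rw [hσtr] at h1
    exact_mod_cast h1.symm
  have hab1 : a - b = 1 := by
    rw [ha_def, hb_def, ← Finset.sum_sub_distrib]
    rw [← hμsum]
    refine Finset.sum_congr rfl fun i _ => ?_
    rcases le_or_gt (SpecAux.μ hσH i) 0 with h | h
    · simp [SpecAux.μp, SpecAux.μn, max_eq_right h, max_eq_left (neg_nonneg.mpr h)]
    · simp [SpecAux.μp, SpecAux.μn, max_eq_left h.le, max_eq_right (neg_nonpos.mpr h.le)]
  have hb0 : 0 ≤ b := Finset.sum_nonneg fun i _ => le_max_right _ _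
  have hT1 : 1 ≤ a + b := by linarith
  have hTnorm : traceNorm σ = a + b := by
    rw [SpecAux.traceNorm_eq_sum_abs hσH, ha_def, hb_def, ← Finset.sum_add_distrib]
    refine Finset.sum_congr rfl fun i _ => ?_
    rcases le_or_gt (SpecAux.μ hσH i) 0 with h | h
    · simp [SpecAux.μp, SpecAux.μn, max_eq_right h, max_eq_left (neg_nonneg.mpr h),
        abs_of_nonpos h]
    · simp [SpecAux.μp, SpecAux.μn, max_eq_left h.le, max_eq_right (neg_nonpos.mpr h.le),
        abs_of_pos h]
  set d : ℕ := ⌈(2 : ℝ) ^ ((n : ℝ) * EN ρ)⌉₊ with hd_def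
  have hEN : (2 : ℝ) ^ ((n : ℝ) * EN ρ) = (a + b) ^ n := by
    have hT0 : (0 : ℝ) < a + b := by linarith
    have : EN ρ = Real.logb 2 (a + b) := by
      rw [EN, ← hσdef, hTnorm]
    rw [this, mul_comm, Real.rpow_mul (by norm_num : (0:ℝ) ≤ 2),
      Real.rpow_logb (by norm_num) (by norm_num) hT0, Real.rpow_natCast]
  have hd1 : 1 ≤ d := Nat.ceil_pos.mpr (Real.rpow_pos_of_pos (by norm_num) _)
  have hTd : (a + b) ^ n ≤ (d : ℝ) := by
    rw [← hEN]
    exact Nat.le_ceil _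
  obtain ⟨Mp, Mn, hMpP, hMnP, hMeq, hMtr⟩ := exists_decomp (n := n)
    (SpecAux.pPart_posSemidef hσH) (SpecAux.nPart_posSemidef hσH) hσsub
    (SpecAux.trace_pPart hσH) (SpecAux.trace_nPart hσH)
  set S : ℝ := (a + b) ^ n with hS_def
  have hS1 : 1 ≤ S := one_le_pow₀ hT1
  have hMdiff : Mp.trace - Mn.trace = 1 := by
    have h1 : (tFam (fun _ : Fin n => σ)).trace = 1 := by
      rw [tFam_trace]
      simp [hσtr]
    rw [← Matrix.trace_sub, ← hMeq, h1]
  set tp : ℝ := (S + 1) / 2 with htp_def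
  set tn : ℝ := (S - 1) / 2 with htn_def
  have htp : Mp.trace = (tp : ℂ) := by
    have : Mp.trace = ((Mp.trace + Mn.trace) + (Mp.trace - Mn.trace)) / 2 := by ring
    rw [this, hMtr, hMdiff, htp_def]
    push_cast
    ring
  have htn : Mn.trace = (tn : ℂ) := by
    have : Mn.trace = ((Mp.trace + Mn.trace) - (Mp.trace - Mn.trace)) / 2 := by ring
    rw [this, hMtr, hMdiff, htn_def]
    push_cast
    ring
  have htn0 : 0 ≤ tn := by rw [htn_def]; linarith
  have htpn : tp - tn = 1 := by rw [htp_def, htn_def]; ring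
  have htpnS : tp + tn ≤ (d : ℝ) := by
    have : tp + tn = S := by rw [htp_def, htn_def]; ring
    rw [this]
    exact hTd
  obtain ⟨A, B, hA, hB, hAtr, hBtr, hComb⟩ :=
    exists_AB hMpP hMnP hMeq htp htn htpn htn0 hd1 htpnS
  have hdC : (d : ℂ) ≠ 0 := Nat.cast_ne_zero.mpr (by omega)
  -- the dilution map
  set Λ : BMat (Fin d) (Fin d) →ₗ[ℂ] BMat (Fin n → Fin dA) (Fin n → Fin dB) :=
    LamL (PpM d) (PmM d) A B with hΛ_def
  have hΛ_app : ∀ X, Λ X = ptB ((PpM d * ptB X).trace • A + (PmM d * ptB X).trace • B) :=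
    fun X => rfl
  -- value on the maximally entangled state
  have hΛMES : Λ (MES d) = tensorPow ρ n := by
    have hgam : (PpM d * ptB (MES d)).trace • A + (PmM d * ptB (MES d)).trace • B =
        tFam (fun _ : Fin n => σ) := by
      rw [ptB_MES, Matrix.mul_smul, Matrix.mul_smul, PpM_mul_Sw, PmM_mul_Sw,
        Matrix.trace_smul, Matrix.trace_smul, trace_PpM]
      have htm : (PmM d).trace = (2 : ℂ)⁻¹ * ((d : ℂ) * d - d) := trace_PmM
      rw [Matrix.trace_neg, htm]
      have e1 : (d : ℂ)⁻¹ • ((2 : ℂ)⁻¹ * ((d : ℂ) * d + d)) = ((d : ℂ) + 1) / 2 := by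
        rw [smul_eq_mul]
        field_simp
      have e2 : (d : ℂ)⁻¹ • (-((2 : ℂ)⁻¹ * ((d : ℂ) * d - d))) = -(((d : ℂ) - 1) / 2) := by
        rw [smul_eq_mul]
        field_simp
      rw [e1, e2, neg_smul, ← sub_eq_add_neg]
      exact hComb
    rw [hΛ_app, hgam]
    rfl
  -- PPTq property
  have hPPT : IsPPTq Λ := by
    refine ⟨?_, ?_, ?_⟩
    · intro X hX
      rw [hΛ_app]
      apply ptB_isHermitian
      have hY : (ptB X).IsHermitian := ptB_isHermitian hX
      exact (isHermitian_smul_real hA.1 (star_trace_mul_herm PpM_herm hY)).add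
        (isHermitian_smul_real hB.1 (star_trace_mul_herm PmM_herm hY))
    · intro X
      rw [hΛ_app, ptB_trace, Matrix.trace_add, Matrix.trace_smul, Matrix.trace_smul,
        hAtr, hBtr, smul_eq_mul, smul_eq_mul, mul_one, mul_one, ← Matrix.trace_add,
        ← Matrix.add_mul, PpM_add_PmM, Matrix.one_mul, ptB_trace]
    · have hfun : (fun X => ptB (Λ (ptB X))) =
          fun X => (PpM d * X).trace • A + (PmM d * X).trace • B := rfl
      rw [hfun]
      exact cp_add (cp_traceForm _ _ PpM_posSemidef hA) (cp_traceForm _ _ PmM_posSemidef hB)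
  -- conclude via the infimum
  have hbdd : BddBelow { x : ℝ | ∃ d' : ℕ, 0 < d' ∧ x = Real.logb 2 d' ∧
      ∃ Λ' : BMat (Fin d') (Fin d') →ₗ[ℂ] BMat (Fin n → Fin dA) (Fin n → Fin dB),
        IsPPTq Λ' ∧ Λ' (MES d') = tensorPow ρ n } := by
    refine ⟨0, fun x hx => ?_⟩
    obtain ⟨d', hd', hx', -⟩ := hx
    rw [hx']
    exact Real.logb_nonneg one_lt_two (by exact_mod_cast hd')
  have hmem : Real.logb 2 (d : ℝ) ∈ { x : ℝ | ∃ d' : ℕ, 0 < d' ∧ x = Real.logb 2 d' ∧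
      ∃ Λ' : BMat (Fin d') (Fin d') →ₗ[ℂ] BMat (Fin n → Fin dA) (Fin n → Fin dB),
        IsPPTq Λ' ∧ Λ' (MES d') = tensorPow ρ n } :=
    ⟨d, by omega, rfl, Λ, hPPT, hΛMES⟩
  exact csInf_le hbdd hmem

end
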